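/- Let M be a real symmetric PSD n×n matrix with eigenvalues μ₁ ≤ … ≤ μₙ. Starting from x₀ uniformly random in {-1,1}ⁿ and setting x_k = M^k x₀, for any ε with 16/n ≤ ε and k ≥ C·log(n)/ε (for a sufficiently large constant C), with probability at least 3/16 the vector x_k is nonzero and its Rayleigh quotient satisfies (1-ε)·μₙ ≤ (x_kᵀ M x_k)/(x_kᵀ x_k) ≤ μₙ. -/

import Mathlib

open Matrix Finset

namespace Stmt19Aux


variable {n : ℕ}


variable {n : ℕ}

noncomputable def sgn (σ : Fin n → Bool) (i : Fin n) : ℝ := if σ i then 1 else -1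

lemma sgn_sq (σ : Fin n → Bool) (i : Fin n) : sgn σ i ^ 2 = 1 := by
  unfold sgn; cases σ i <;> norm_num

lemma sgn_cases (σ : Fin n → Bool) (i : Fin n) : sgn σ i = 1 ∨ sgn σ i = -1 := by
  unfold sgn; cases σ i <;> simp

lemma card_cube : (Finset.univ : Finset (Fin n → Bool)).card = 2 ^ n := by
  simp [Finset.card_univ]

lemma flip_sum (j : Fin n) (f : (Fin n → Bool) → ℝ)
    (hf : ∀ σ b, f (Function.update σ j b) = f σ) :
    ∑ σ : Fin n → Bool, sgn σ j * f σ = 0 := by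
  apply Finset.sum_ninvolution (fun σ => Function.update σ j (!(σ j)))
  · intro σ
    have h1 : f (Function.update σ j (!(σ j))) = f σ := hf σ _
    have h2 : sgn (Function.update σ j (!(σ j))) j = - sgn σ j := by
      unfold sgn; simp [Function.update_self]; cases σ j <;> simp
    rw [h1, h2]; ring
  · intro σ h
    intro heq
    have := congrFun heq j
    simp [Function.update_self] at this
  · intro _; exact Finset.mem_univ _
  · intro σ
    funext i
    by_cases hi : i = j
    · subst hi; simp [Function.update_self]
    · simp [Function.update_of_ne hi]

noncomputable def Z (a : Fin n → ℝ) (s : Finset (Fin n)) (σ : Fin n → Bool) : ℝ :=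
  ∑ i ∈ s, a i * sgn σ i

lemma Z_update (a : Fin n → ℝ) (s : Finset (Fin n)) (j : Fin n) (hj : j ∉ s)
    (σ : Fin n → Bool) (b : Bool) : Z a s (Function.update σ j b) = Z a s σ := by
  unfold Z
  apply Finset.sum_congr rfl
  intro i hi
  have : i ≠ j := fun h => hj (h ▸ hi)
  unfold sgn
  rw [Function.update_of_ne this]

lemma second_moment (a : Fin n → ℝ) (s : Finset (Fin n)) :
    ∑ σ : Fin n → Bool, (Z a s σ) ^ 2 = 2 ^ n * ∑ i ∈ s, (a i) ^ 2 := by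
  classical
  induction s using Finset.induction_on with
  | empty => simp [Z]
  | @insert j t hj ih =>
    have hins : ∀ σ, Z a (insert j t) σ = a j * sgn σ j + Z a t σ := by
      intro σ; unfold Z; rw [Finset.sum_insert hj]
    have key : ∀ σ : Fin n → Bool,
        (Z a (insert j t) σ) ^ 2 = ((a j)^2 + (Z a t σ)^2) + sgn σ j * (2 * a j * Z a t σ) := by
      intro σ
      rw [hins σ]
      rcases sgn_cases σ j with h | h <;> rw [h] <;> ring
    rw [Finset.sum_congr rfl fun σ _ => key σ]
    rw [Finset.sum_add_distrib]
    rw [flip_sum j _ (fun σ b => by rw [Z_update a t j hj]), add_zero]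
    rw [Finset.sum_add_distrib, ih, Finset.sum_const, card_cube, Finset.sum_insert hj]
    push_cast
    ring

lemma fourth_moment (a : Fin n → ℝ) (s : Finset (Fin n)) :
    ∑ σ : Fin n → Bool, (Z a s σ) ^ 4 ≤ 3 * 2 ^ n * (∑ i ∈ s, (a i) ^ 2) ^ 2 := by
  classical
  induction s using Finset.induction_on with
  | empty => simp [Z]
  | @insert j t hj ih =>
    have hins : ∀ σ, Z a (insert j t) σ = a j * sgn σ j + Z a t σ := by
      intro σ; unfold Z; rw [Finset.sum_insert hj]
    have key : ∀ σ : Fin n → Bool,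
        (Z a (insert j t) σ) ^ 4 = ((a j)^4 + 6 * (a j)^2 * (Z a t σ)^2 + (Z a t σ)^4)
          + sgn σ j * (4 * (a j)^3 * Z a t σ + 4 * a j * (Z a t σ)^3) := by
      intro σ
      rw [hins σ]
      rcases sgn_cases σ j with h | h <;> rw [h] <;> ring
    rw [Finset.sum_congr rfl fun σ _ => key σ]
    rw [Finset.sum_add_distrib]
    rw [flip_sum j _ (fun σ b => by rw [Z_update a t j hj]), add_zero]
    rw [Finset.sum_add_distrib, Finset.sum_add_distrib, Finset.sum_const, card_cube]
    rw [← Finset.mul_sum, second_moment, Finset.sum_insert hj]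
    have hA : (0:ℝ) ≤ ∑ i ∈ t, (a i)^2 := Finset.sum_nonneg fun i _ => sq_nonneg _
    have h2 : (0:ℝ) ≤ 2 ^ n := by positivity
    rw [nsmul_eq_mul]
    push_cast
    nlinarith [ih, mul_nonneg h2 (pow_nonneg (sq_nonneg (a j)) 2), sq_nonneg (a j)]





lemma pz (a : Fin n → ℝ) (ha : ∑ i, (a i) ^ 2 = 1) :
    (3:ℝ)/16 * 2 ^ n ≤
      ((Finset.univ.filter fun σ : Fin n → Bool => 1/4 ≤ (Z a Finset.univ σ)^2).card : ℝ) := by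
  classical
  set A := Finset.univ.filter fun σ : Fin n → Bool => 1/4 ≤ (Z a Finset.univ σ)^2 with hA
  set B := Finset.univ.filter fun σ : Fin n → Bool => ¬ (1/4 ≤ (Z a Finset.univ σ)^2) with hB
  have hsplit : ∑ σ ∈ A, (Z a Finset.univ σ)^2 + ∑ σ ∈ B, (Z a Finset.univ σ)^2
      = (2:ℝ) ^ n := by
    rw [Finset.sum_filter_add_sum_filter_not]
    rw [second_moment, ha, mul_one]
  have hBcard : (B.card : ℝ) ≤ 2 ^ n := by
    have := Finset.card_filter_le (Finset.univ : Finset (Fin n → Bool))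
      (fun σ => ¬ (1/4 ≤ (Z a Finset.univ σ)^2))
    rw [card_cube] at this
    exact_mod_cast this
  have hBsum : ∑ σ ∈ B, (Z a Finset.univ σ)^2 ≤ (2:ℝ)^n / 4 := by
    calc ∑ σ ∈ B, (Z a Finset.univ σ)^2 ≤ ∑ σ ∈ B, (1:ℝ)/4 := by
          apply Finset.sum_le_sum
          intro σ hσ
          rw [hB, Finset.mem_filter] at hσ
          linarith [hσ.2]
      _ = B.card * (1/4) := by rw [Finset.sum_const]; rw [nsmul_eq_mul]
      _ ≤ (2:ℝ)^n / 4 := by linarith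
  have hAsum : (3:ℝ)/4 * 2^n ≤ ∑ σ ∈ A, (Z a Finset.univ σ)^2 := by linarith
  have hCS : (∑ σ ∈ A, (Z a Finset.univ σ)^2)^2 ≤ (A.card : ℝ) * (3 * 2^n) := by
    have h1 : (∑ σ ∈ A, 1 * (Z a Finset.univ σ)^2)^2
        ≤ (∑ σ ∈ A, (1:ℝ)^2) * (∑ σ ∈ A, ((Z a Finset.univ σ)^2)^2) :=
      Finset.sum_mul_sq_le_sq_mul_sq A _ _
    simp only [one_mul, one_pow, Finset.sum_const, nsmul_eq_mul, mul_one] at h1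
    have h2 : ∑ σ ∈ A, ((Z a Finset.univ σ)^2)^2 ≤ 3 * 2^n := by
      calc ∑ σ ∈ A, ((Z a Finset.univ σ)^2)^2
          = ∑ σ ∈ A, (Z a Finset.univ σ)^4 := by
            apply Finset.sum_congr rfl; intro σ _; ring
        _ ≤ ∑ σ : Fin n → Bool, (Z a Finset.univ σ)^4 := by
            apply Finset.sum_le_sum_of_subset_of_nonneg (Finset.filter_subset _ _)
            intro σ _ _; positivity
        _ ≤ 3 * 2^n * (∑ i, (a i)^2)^2 := fourth_moment a Finset.univ
        _ = 3 * 2^n := by rw [ha]; ring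
    calc (∑ σ ∈ A, (Z a Finset.univ σ)^2)^2 ≤ (A.card : ℝ) * ∑ σ ∈ A, ((Z a Finset.univ σ)^2)^2 := h1
      _ ≤ (A.card : ℝ) * (3 * 2^n) := by
          apply mul_le_mul_of_nonneg_left h2 (Nat.cast_nonneg _)
  have hp : (0:ℝ) < 2^n := by positivity
  nlinarith [hAsum, hCS, sq_nonneg (∑ σ ∈ A, (Z a Finset.univ σ)^2)]




variable {n : ℕ}

lemma dot_sum_right (x : Fin n → ℝ) (f : Fin n → Fin n → ℝ) :
    x ⬝ᵥ (∑ i, f i) = ∑ i, x ⬝ᵥ f i := by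
  simp only [dotProduct, Finset.sum_apply, Finset.mul_sum]
  rw [Finset.sum_comm]

lemma dot_sum_left (x : Fin n → ℝ) (f : Fin n → Fin n → ℝ) :
    (∑ i, f i) ⬝ᵥ x = ∑ i, f i ⬝ᵥ x := by
  simp only [dotProduct, Finset.sum_apply, Finset.sum_mul]
  rw [Finset.sum_comm]

lemma mulVec_sum' (M : Matrix (Fin n) (Fin n) ℝ) (f : Fin n → Fin n → ℝ) :
    M *ᵥ (∑ i, f i) = ∑ i, M *ᵥ f i := by
  ext j
  simp only [Matrix.mulVec, dot_sum_right, Finset.sum_apply]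

lemma expansion (v : Fin n → Fin n → ℝ)
    (hv : ∀ i j, v i ⬝ᵥ v j = if i = j then (1 : ℝ) else 0)
    (x : Fin n → ℝ) : x = ∑ i, (v i ⬝ᵥ x) • v i := by
  classical
  have hli : LinearIndependent ℝ v := by
    rw [Fintype.linearIndependent_iff]
    intro g hg j
    have h := congrArg (fun y => v j ⬝ᵥ y) hg
    simp only [dotProduct_zero] at h
    rw [dot_sum_right] at h
    simp only [dotProduct_smul, smul_eq_mul] at h
    rw [Finset.sum_congr rfl (fun i _ => by rw [hv j i])] at h
    simp only [mul_ite, mul_one, mul_zero] at h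
    rw [Finset.sum_ite_eq Finset.univ j g] at h
    simpa using h
  have hcard : Fintype.card (Fin n) = Module.finrank ℝ (Fin n → ℝ) := by
    simp [Module.finrank_pi]
  have hspan := hli.span_eq_top_of_card_eq_finrank' hcard
  have hx : x ∈ Submodule.span ℝ (Set.range v) := hspan ▸ Submodule.mem_top
  induction hx using Submodule.span_induction with
  | mem y hy =>
    obtain ⟨j, rfl⟩ := hy
    rw [Finset.sum_congr rfl (fun i _ => by rw [hv i j])]
    rw [Finset.sum_congr rfl (fun i _ => by rw [ite_smul, one_smul, zero_smul])]
    rw [Finset.sum_ite_eq' Finset.univ j v]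
    simp
  | zero => simp
  | add y z _ _ hy hz =>
    nth_rewrite 1 [hy, hz]
    rw [← Finset.sum_add_distrib]
    apply Finset.sum_congr rfl
    intro i _
    rw [dotProduct_add, add_smul]
  | smul c y _ hy =>
    nth_rewrite 1 [hy]
    rw [Finset.smul_sum]
    apply Finset.sum_congr rfl
    intro i _
    rw [dotProduct_smul, smul_eq_mul, smul_smul]

lemma dot_expand (v : Fin n → Fin n → ℝ)
    (hv : ∀ i j, v i ⬝ᵥ v j = if i = j then (1 : ℝ) else 0)
    (a b : Fin n → ℝ) :
    (∑ i, a i • v i) ⬝ᵥ (∑ i, b i • v i) = ∑ i, a i * b i := by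
  rw [dot_sum_left]
  apply Finset.sum_congr rfl
  intro i _
  rw [smul_dotProduct, dot_sum_right, smul_eq_mul]
  rw [Finset.sum_congr rfl (fun j _ => by rw [dotProduct_smul, smul_eq_mul, hv i j])]
  simp

lemma pow_mulVec (M : Matrix (Fin n) (Fin n) ℝ) (μ : Fin n → ℝ) (v : Fin n → Fin n → ℝ)
    (hMv : ∀ i, M *ᵥ v i = μ i • v i) (c : Fin n → ℝ) (k : ℕ) :
    (M ^ k) *ᵥ (∑ i, c i • v i) = ∑ i, (μ i ^ k * c i) • v i := by
  induction k with
  | zero => simp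
  | succ k ih =>
    rw [pow_succ', ← Matrix.mulVec_mulVec, ih]
    rw [mulVec_sum']
    apply Finset.sum_congr rfl
    intro i _
    rw [Matrix.mulVec_smul, hMv i, smul_smul]
    rw [pow_succ]
    ring_nf


set_option maxHeartbeats 1000000 in
lemma main_pointwise (hn : 0 < n) (M : Matrix (Fin n) (Fin n) ℝ) (hM : M.PosSemidef)
    (μ : Fin n → ℝ) (v : Fin n → Fin n → ℝ) (hmono : Monotone μ)
    (hv : ∀ i j, v i ⬝ᵥ v j = if i = j then (1 : ℝ) else 0)
    (hMv : ∀ i, M *ᵥ v i = μ i • v i)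
    (hpos : 0 < μ ⟨n - 1, Nat.sub_lt hn Nat.one_pos⟩)
    (ε : ℝ) (k : ℕ) (hε : 16 / (n : ℝ) ≤ ε) (hk : 2 * Real.log n / ε ≤ (k : ℝ))
    (x₀ : Fin n → ℝ) (hx₀ : x₀ ⬝ᵥ x₀ = (n : ℝ))
    (hc : 1/4 ≤ (v ⟨n - 1, Nat.sub_lt hn Nat.one_pos⟩ ⬝ᵥ x₀) ^ 2) :
    ((M ^ k) *ᵥ x₀) ≠ 0 ∧
    (1 - ε) * μ ⟨n - 1, Nat.sub_lt hn Nat.one_pos⟩ ≤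
      (((M ^ k) *ᵥ x₀) ⬝ᵥ M *ᵥ ((M ^ k) *ᵥ x₀)) / (((M ^ k) *ᵥ x₀) ⬝ᵥ ((M ^ k) *ᵥ x₀)) ∧
    (((M ^ k) *ᵥ x₀) ⬝ᵥ M *ᵥ ((M ^ k) *ᵥ x₀)) / (((M ^ k) *ᵥ x₀) ⬝ᵥ ((M ^ k) *ᵥ x₀)) ≤
      μ ⟨n - 1, Nat.sub_lt hn Nat.one_pos⟩ := by
  classical
  set last : Fin n := ⟨n - 1, Nat.sub_lt hn Nat.one_pos⟩ with hlast
  set m : ℝ := μ last with hm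
  set c : Fin n → ℝ := fun i => v i ⬝ᵥ x₀ with hcdef
  have hnR : (0:ℝ) < n := by exact_mod_cast hn
  have hε0 : 0 < ε := lt_of_lt_of_le (by positivity) hε
  have hμ0 : ∀ i, 0 ≤ μ i := by
    intro i
    have h1 := hM.dotProduct_mulVec_nonneg (v i)
    have h2 : star (v i) = v i := by simp
    rw [h2, hMv i, dotProduct_smul, smul_eq_mul, hv i i] at h1
    simpa using h1
  have hμm : ∀ i, μ i ≤ m := by
    intro i
    apply hmono
    rw [Fin.le_def]
    have := i.isLt
    simp only [hlast]
    omega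
  have hm0 : 0 < m := hpos
  have hx0 : x₀ = ∑ i, c i • v i := expansion v hv x₀
  have hxk : (M ^ k) *ᵥ x₀ = ∑ i, (μ i ^ k * c i) • v i := by
    rw [hx0]; exact pow_mulVec M μ v hMv c k
  have hMxk : M *ᵥ ((M ^ k) *ᵥ x₀) = ∑ i, (μ i ^ (k+1) * c i) • v i := by
    rw [Matrix.mulVec_mulVec, ← pow_succ', hx0]
    exact pow_mulVec M μ v hMv c (k+1)
  have hD : ((M ^ k) *ᵥ x₀) ⬝ᵥ ((M ^ k) *ᵥ x₀) = ∑ i, μ i ^ (2*k) * (c i)^2 := by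
    rw [hxk, dot_expand v hv]
    apply Finset.sum_congr rfl
    intro i _
    ring
  have hN : ((M ^ k) *ᵥ x₀) ⬝ᵥ (M *ᵥ ((M ^ k) *ᵥ x₀)) = ∑ i, μ i ^ (2*k+1) * (c i)^2 := by
    rw [hMxk, hxk, dot_expand v hv]
    apply Finset.sum_congr rfl
    intro i _
    ring
  have hParseval : ∑ i, (c i)^2 = (n : ℝ) := by
    have h := hx₀
    rw [hx0, dot_expand v hv] at h
    rw [← h]
    apply Finset.sum_congr rfl
    intro i _; ring
  set D : ℝ := ∑ i, μ i ^ (2*k) * (c i)^2 with hDdef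
  set N : ℝ := ∑ i, μ i ^ (2*k+1) * (c i)^2 with hNdef
  have hterm_nonneg : ∀ i, 0 ≤ μ i ^ (2*k) * (c i)^2 :=
    fun i => mul_nonneg (pow_nonneg (hμ0 i) _) (sq_nonneg _)
  have hclast : 1/4 ≤ (c last)^2 := hc
  have hDpos : 0 < D := by
    have h1 : m ^ (2*k) * (c last)^2 ≤ D :=
      Finset.single_le_sum (fun i _ => hterm_nonneg i) (Finset.mem_univ last)
    nlinarith [pow_pos hm0 (2*k), hclast, h1]
  have hNnonneg : 0 ≤ N := Finset.sum_nonneg fun i _ =>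
    mul_nonneg (pow_nonneg (hμ0 i) _) (sq_nonneg _)
  have hND : N ≤ m * D := by
    rw [hDdef, hNdef, Finset.mul_sum]
    apply Finset.sum_le_sum
    intro i _
    have hpw : μ i ^ (2*k+1) = μ i * μ i ^ (2*k) := by ring
    rw [hpw]
    have := hμm i
    nlinarith [hterm_nonneg i, pow_nonneg (hμ0 i) (2*k), sq_nonneg (c i)]
  refine ⟨?_, ?_, ?_⟩
  · intro h0
    rw [h0] at hD
    simp only [dotProduct_zero] at hD
    rw [← hD] at hDpos
    exact lt_irrefl _ hDpos
  · rw [hN, hD, le_div_iff₀ hDpos]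
    by_cases hε1 : 1 ≤ ε
    · have h1 : (1 - ε) * m ≤ 0 := mul_nonpos_of_nonpos_of_nonneg (by linarith) hm0.le
      nlinarith [hNnonneg, hDpos]
    · push_neg at hε1
      have hkey : (1 - ε/2) ^ (2*k) * n ≤ ε / 4 := by
        have h1 : (0:ℝ) ≤ 1 - ε/2 := by linarith
        have h2 : 1 - ε/2 ≤ Real.exp (-(ε/2)) := by
          have := Real.add_one_le_exp (-(ε/2))
          linarith
        have h3 : (1 - ε/2) ^ (2*k) ≤ Real.exp (-(ε/2)) ^ (2*k) :=
          pow_le_pow_left₀ h1 h2 (2*k)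
        have h4 : Real.exp (-(ε/2)) ^ (2*k) = Real.exp (-(ε * k)) := by
          rw [← Real.exp_nat_mul]
          congr 1
          push_cast
          ring
        have h5 : 2 * Real.log n ≤ ε * k := by
          rw [div_le_iff₀ hε0] at hk
          linarith
        have h6 : Real.exp (-(ε * k)) ≤ Real.exp (-(2 * Real.log n)) := by
          apply Real.exp_le_exp.mpr
          linarith
        have h7 : Real.exp (-(2 * Real.log n)) = 1 / ((n:ℝ) * n) := by
          rw [Real.exp_neg, show (2:ℝ) * Real.log n = Real.log n + Real.log n by ring,
            Real.exp_add, Real.exp_log hnR, one_div]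
        have h8 : (1 - ε/2) ^ (2*k) ≤ 1 / ((n:ℝ) * n) := by
          calc (1 - ε/2) ^ (2*k) ≤ Real.exp (-(ε/2)) ^ (2*k) := h3
            _ = Real.exp (-(ε * k)) := h4
            _ ≤ Real.exp (-(2 * Real.log n)) := h6
            _ = 1 / ((n:ℝ) * n) := h7
        have hε' : (16:ℝ) ≤ ε * n := by
          rw [div_le_iff₀ hnR] at hε; linarith
        have h9 : (1 - ε/2) ^ (2*k) * n ≤ 1 / (n:ℝ) := by
          calc (1 - ε/2) ^ (2*k) * n ≤ (1 / ((n:ℝ) * n)) * n :=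
              mul_le_mul_of_nonneg_right h8 hnR.le
            _ = 1 / (n:ℝ) := by field_simp
        have h10 : 1 / (n:ℝ) ≤ ε / 4 := by
          rw [div_le_div_iff₀ hnR (by norm_num : (0:ℝ) < 4)]
          nlinarith [hε']
        linarith
      set T : ℝ := (1 - ε/2) * m with hT
      have hT0 : 0 ≤ T := mul_nonneg (by linarith) hm0.le
      have hTk : T ^ (2*k) = (1 - ε/2)^(2*k) * m^(2*k) := by rw [hT, mul_pow]
      have hms : m^(2*k+1) = m^(2*k) * m := pow_succ m (2*k)
      have hgoal : 0 ≤ ∑ i, μ i ^ (2*k) * (c i)^2 * (μ i - (1-ε)*m) := by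
        rw [← Finset.sum_filter_add_sum_filter_not Finset.univ (fun i => T ≤ μ i)]
        have hP1 : ∀ i ∈ Finset.univ.filter (fun i => T ≤ μ i),
            0 ≤ μ i ^ (2*k) * (c i)^2 * (μ i - (1-ε)*m) := by
          intro i hi
          rw [Finset.mem_filter] at hi
          have h1 : (1-ε)*m ≤ T := by rw [hT]; nlinarith [hm0]
          exact mul_nonneg (hterm_nonneg i) (by linarith [hi.2])
        have hlastP : last ∈ Finset.univ.filter (fun i => T ≤ μ i) := by
          rw [Finset.mem_filter]
          refine ⟨Finset.mem_univ _, ?_⟩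
          show T ≤ μ last
          rw [hT, ← hm]; nlinarith [hm0]
        have hP : ε/4 * m^(2*k+1) ≤
            ∑ i ∈ Finset.univ.filter (fun i => T ≤ μ i),
              μ i ^ (2*k) * (c i)^2 * (μ i - (1-ε)*m) := by
          have h1 := Finset.single_le_sum hP1 hlastP
          have h2 : μ last ^ (2*k) * (c last)^2 * (μ last - (1-ε)*m)
              = m^(2*k) * (c last)^2 * (ε * m) := by rw [← hm]; ring
          rw [h2] at h1
          have h3 : ε/4 * m^(2*k+1) ≤ m^(2*k) * (c last)^2 * (ε * m) := by
            rw [hms]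
            nlinarith [mul_nonneg (mul_nonneg (mul_nonneg
              (sub_nonneg.2 hclast) hε0.le) hm0.le) (pow_nonneg hm0.le (2*k))]
          linarith
        have hQ : -(ε/4 * m^(2*k+1)) ≤
            ∑ i ∈ Finset.univ.filter (fun i => ¬ T ≤ μ i),
              μ i ^ (2*k) * (c i)^2 * (μ i - (1-ε)*m) := by
          have hstep : ∀ i ∈ Finset.univ.filter (fun i => ¬ T ≤ μ i),
              -(m * T^(2*k) * (c i)^2) ≤ μ i ^ (2*k) * (c i)^2 * (μ i - (1-ε)*m) := by
            intro i hi
            rw [Finset.mem_filter] at hi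
            have hμT : μ i ≤ T := le_of_not_ge hi.2
            have hpow : μ i ^ (2*k) ≤ T ^ (2*k) := pow_le_pow_left₀ (hμ0 i) hμT _
            have hAB : μ i ^ (2*k) * (c i)^2 ≤ T ^ (2*k) * (c i)^2 :=
              mul_le_mul_of_nonneg_right hpow (sq_nonneg _)
            have hB0 : 0 ≤ T ^ (2*k) * (c i)^2 :=
              mul_nonneg (pow_nonneg hT0 _) (sq_nonneg _)
            have hcoef : -m ≤ μ i - (1-ε)*m := by nlinarith [hμ0 i, hm0, hε0]
            rcases le_or_gt 0 (μ i - (1-ε)*m) with h | h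
            · have h1 : 0 ≤ μ i ^ (2*k) * (c i)^2 * (μ i - (1-ε)*m) :=
                mul_nonneg (hterm_nonneg i) h
              nlinarith [hB0, hm0]
            · have e1 : T ^ (2*k) * (c i)^2 * (μ i - (1-ε)*m)
                  ≤ μ i ^ (2*k) * (c i)^2 * (μ i - (1-ε)*m) :=
                mul_le_mul_of_nonpos_right hAB h.le
              have e2 : T ^ (2*k) * (c i)^2 * (-m) ≤ T ^ (2*k) * (c i)^2 * (μ i - (1-ε)*m) :=
                mul_le_mul_of_nonneg_left hcoef hB0
              nlinarith [e1, e2]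
          have hsum1 : ∑ i ∈ Finset.univ.filter (fun i => ¬ T ≤ μ i), -(m * T^(2*k) * (c i)^2)
              ≤ ∑ i ∈ Finset.univ.filter (fun i => ¬ T ≤ μ i),
                  μ i ^ (2*k) * (c i)^2 * (μ i - (1-ε)*m) :=
            Finset.sum_le_sum hstep
          have hQc : ∑ i ∈ Finset.univ.filter (fun i => ¬ T ≤ μ i), (c i)^2 ≤ (n:ℝ) := by
            rw [← hParseval]
            exact Finset.sum_le_sum_of_subset_of_nonneg (Finset.filter_subset _ _)
              (fun i _ _ => sq_nonneg _)
          have hsum2 : ∑ i ∈ Finset.univ.filter (fun i => ¬ T ≤ μ i), -(m * T^(2*k) * (c i)^2)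
              = -(m * T^(2*k) * ∑ i ∈ Finset.univ.filter (fun i => ¬ T ≤ μ i), (c i)^2) := by
            rw [Finset.mul_sum, ← Finset.sum_neg_distrib]
          have hmT0 : 0 ≤ m * T^(2*k) := mul_nonneg hm0.le (pow_nonneg hT0 _)
          have hsum3 : -(m * T^(2*k) * (n:ℝ))
              ≤ -(m * T^(2*k) * ∑ i ∈ Finset.univ.filter (fun i => ¬ T ≤ μ i), (c i)^2) := by
            apply neg_le_neg
            exact mul_le_mul_of_nonneg_left hQc hmT0
          have h11 : m * T^(2*k) * (n:ℝ) ≤ ε/4 * m^(2*k+1) := by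
            rw [hTk, hms]
            nlinarith [mul_le_mul_of_nonneg_right hkey
              (mul_nonneg (pow_nonneg hm0.le (2*k)) hm0.le)]
          linarith [hsum1, hsum2 ▸ hsum3]
        linarith [hP, hQ]
      have hsum : N - (1-ε)*m*D = ∑ i, μ i ^ (2*k) * (c i)^2 * (μ i - (1-ε)*m) := by
        rw [hNdef, hDdef, Finset.mul_sum, ← Finset.sum_sub_distrib]
        apply Finset.sum_congr rfl
        intro i _
        ring
      linarith [hgoal, hsum]
  · rw [hN, hD, div_le_iff₀ hDpos]
    linarith [hND]



end Stmt19Aux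

open Stmt19Aux


open Matrix

/-- Power method guarantee: for a real symmetric PSD matrix `M` with largest
eigenvalue `μₙ > 0`, starting from a uniformly random sign vector `x₀` and taking
`k ≥ C log n / ε` iterations, with probability at least `3/16` the Rayleigh
quotient of `x_k = M^k x₀` lies in `[(1-ε)μₙ, μₙ]`. -/
theorem stmt19 :
    ∃ C : ℝ, 0 < C ∧
      ∀ (n : ℕ) (hn : 0 < n) (M : Matrix (Fin n) (Fin n) ℝ), M.PosSemidef →
      ∀ (μ : Fin n → ℝ) (v : Fin n → Fin n → ℝ),
        Monotone μ →
        (∀ i j, v i ⬝ᵥ v j = if i = j then (1 : ℝ) else 0) →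
        (∀ i, M *ᵥ v i = μ i • v i) →
        0 < μ ⟨n - 1, by omega⟩ →
        ∀ (ε : ℝ) (k : ℕ), 16 / (n : ℝ) ≤ ε → C * Real.log n / ε ≤ (k : ℝ) →
        (3 : ℝ) / 16 ≤
          ((Finset.univ.filter fun σ : Fin n → Bool =>
              ((M ^ k) *ᵥ fun i => if σ i then (1 : ℝ) else -1) ≠ 0 ∧
              (1 - ε) * μ ⟨n - 1, by omega⟩ ≤
                (((M ^ k) *ᵥ fun i => if σ i then (1 : ℝ) else -1) ⬝ᵥ
                    M *ᵥ ((M ^ k) *ᵥ fun i => if σ i then (1 : ℝ) else -1)) /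
                  (((M ^ k) *ᵥ fun i => if σ i then (1 : ℝ) else -1) ⬝ᵥ
                    ((M ^ k) *ᵥ fun i => if σ i then (1 : ℝ) else -1)) ∧
              (((M ^ k) *ᵥ fun i => if σ i then (1 : ℝ) else -1) ⬝ᵥ
                  M *ᵥ ((M ^ k) *ᵥ fun i => if σ i then (1 : ℝ) else -1)) /
                (((M ^ k) *ᵥ fun i => if σ i then (1 : ℝ) else -1) ⬝ᵥ
                  ((M ^ k) *ᵥ fun i => if σ i then (1 : ℝ) else -1)) ≤
                μ ⟨n - 1, by omega⟩).card : ℝ) / 2 ^ n := by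
    classical
  refine ⟨2, by norm_num, ?_⟩
  intro n hn M hM μ v hmono hv hMv hpos ε k hε hk
  set last : Fin n := ⟨n - 1, by omega⟩ with hlast
  set a : Fin n → ℝ := v last with ha
  have ha1 : ∑ i, (a i) ^ 2 = 1 := by
    have h : v last ⬝ᵥ v last = 1 := by simpa using hv last last
    rw [← h]
    unfold dotProduct
    apply Finset.sum_congr rfl
    intro i _
    rw [ha]; ring
  have hZ : ∀ σ : Fin n → Bool,
      Z a Finset.univ σ = v last ⬝ᵥ (fun i => if σ i then (1:ℝ) else -1) := by
    intro σ
    rfl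
  have hsub : (Finset.univ.filter fun σ : Fin n → Bool => 1/4 ≤ (Z a Finset.univ σ)^2) ⊆
      (Finset.univ.filter fun σ : Fin n → Bool =>
              ((M ^ k) *ᵥ fun i => if σ i then (1 : ℝ) else -1) ≠ 0 ∧
              (1 - ε) * μ ⟨n - 1, by omega⟩ ≤
                (((M ^ k) *ᵥ fun i => if σ i then (1 : ℝ) else -1) ⬝ᵥ
                    M *ᵥ ((M ^ k) *ᵥ fun i => if σ i then (1 : ℝ) else -1)) /
                  (((M ^ k) *ᵥ fun i => if σ i then (1 : ℝ) else -1) ⬝ᵥ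
                    ((M ^ k) *ᵥ fun i => if σ i then (1 : ℝ) else -1)) ∧
              (((M ^ k) *ᵥ fun i => if σ i then (1 : ℝ) else -1) ⬝ᵥ
                  M *ᵥ ((M ^ k) *ᵥ fun i => if σ i then (1 : ℝ) else -1)) /
                (((M ^ k) *ᵥ fun i => if σ i then (1 : ℝ) else -1) ⬝ᵥ
                  ((M ^ k) *ᵥ fun i => if σ i then (1 : ℝ) else -1)) ≤
                μ ⟨n - 1, by omega⟩) := by
    intro σ hσ
    rw [Finset.mem_filter] at hσ ⊢
    refine ⟨Finset.mem_univ _, ?_⟩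
    have hc : 1/4 ≤ (v ⟨n - 1, by omega⟩ ⬝ᵥ (fun i => if σ i then (1:ℝ) else -1)) ^ 2 := by
      rw [← hZ σ] at *
      exact hσ.2
    have hx₀ : (fun i => if σ i then (1:ℝ) else -1) ⬝ᵥ (fun i => if σ i then (1:ℝ) else -1)
        = (n : ℝ) := by
      unfold dotProduct
      rw [Finset.sum_congr rfl (fun i _ => show _ = (1:ℝ) by cases hσi : σ i <;> norm_num [hσi])]
      simp
    exact main_pointwise hn M hM μ v hmono hv hMv hpos ε k hε hk _ hx₀ hc
  have hpz := pz a ha1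
  have hcard := Finset.card_le_card hsub
  have h2n : (0:ℝ) < 2 ^ n := by positivity
  rw [le_div_iff₀ h2n]
  calc (3:ℝ)/16 * 2^n
      ≤ ((Finset.univ.filter fun σ : Fin n → Bool => 1/4 ≤ (Z a Finset.univ σ)^2).card : ℝ) :=
        hpz
    _ ≤ _ := by exact_mod_cast hcard
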